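/- Basis of a complement via non-leading monomials: fix a monomial order m on MvPolynomial (Fin n) ℝ, a degree j : ℕ, and nonzero polynomials f₁, …, f_k, each homogeneous of degree j, whose leading multidegrees are pairwise distinct. Let W be the ℝ-span of f₁, …, f_k and let V be the ℝ-span of the monomials x^A of total degree j such that A is not equal to any of the leading multidegrees m.degree fᵢ. Then V and W are complementary inside the space of degree-j homogeneous polynomials: V ⊓ W = 0 and V ⊔ W = homogeneousSubmodule (Fin n) ℝ j. Equivalently, the monomials x^A (|A| = j, A not a leading multidegree of any fᵢ) together with f₁, …, f_k form a basis of the degree-j homogeneous polynomials, so these monomials map to a basis of the quotient by W. -/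

import Mathlib

open MvPolynomial

/-- The leading multidegree of a multivariate polynomial with respect to a monomial
order: the largest exponent vector in the support, computed in the order's synonym type. -/
noncomputable def MonomialOrder.lmDegree {σ : Type*} (m : MonomialOrder σ) {R : Type*}
    [CommSemiring R] (f : MvPolynomial σ R) : σ →₀ ℕ :=
  m.toSyn.symm (f.support.sup fun d => m.toSyn d)

lemma MonomialOrder.le_degree' {σ : Type*} (m : MonomialOrder σ) {R : Type*}
    [CommSemiring R] (f : MvPolynomial σ R) {A : σ →₀ ℕ} (hA : A ∈ f.support) :
    m.toSyn A ≤ m.toSyn (m.lmDegree f) := by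
  unfold MonomialOrder.lmDegree
  rw [AddEquiv.apply_symm_apply]
  exact Finset.le_sup hA

lemma MonomialOrder.degree_mem_support' {σ : Type*} (m : MonomialOrder σ) {R : Type*}
    [CommSemiring R] {f : MvPolynomial σ R} (hf : f ≠ 0) :
    m.lmDegree f ∈ f.support := by
  obtain ⟨b, hb, h⟩ := Finset.exists_mem_eq_sup f.support
    (MvPolynomial.support_nonempty.mpr hf) (fun d => m.toSyn d)
  unfold MonomialOrder.lmDegree
  rw [h, AddEquiv.symm_apply_apply]
  exact hb

/-- **Basis of a complement via non-leading monomials.**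
Fix a monomial order `m` on `MvPolynomial (Fin n) ℝ`, a degree `j`, and nonzero
polynomials `f 0, …, f (k-1)`, each homogeneous of degree `j`, with pairwise distinct
leading multidegrees.  Let `W` be the span of the `fᵢ` and `V` the span of the
monomials `x^A` of total degree `j` for which `A` is not a leading multidegree of any
`fᵢ`.  Then `V` and `W` are complementary subspaces of the degree-`j` homogeneous
polynomials: `V ⊓ W = ⊥` and `V ⊔ W = homogeneousSubmodule (Fin n) ℝ j`. -/
theorem complement_basis_nonleading_monomials {n k : ℕ}
    (m : MonomialOrder (Fin n)) (j : ℕ)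
    (f : Fin k → MvPolynomial (Fin n) ℝ)
    (hf0 : ∀ i, f i ≠ 0)
    (hfhom : ∀ i, f i ∈ homogeneousSubmodule (Fin n) ℝ j)
    (hdist : Function.Injective fun i => m.lmDegree (f i))
    (W : Submodule ℝ (MvPolynomial (Fin n) ℝ))
    (hW : W = Submodule.span ℝ (Set.range f))
    (V : Submodule ℝ (MvPolynomial (Fin n) ℝ))
    (hV : V = Submodule.span ℝ
      { q : MvPolynomial (Fin n) ℝ | ∃ A : Fin n →₀ ℕ,
          (A.sum fun _ e => e) = j ∧ (∀ i, A ≠ m.lmDegree (f i)) ∧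
          q = monomial A (1 : ℝ) }) :
    V ⊓ W = ⊥ ∧ V ⊔ W = homogeneousSubmodule (Fin n) ℝ j := by
  set D : Fin k → (Fin n →₀ ℕ) := fun i => m.lmDegree (f i) with hD
  -- homogeneity as a coefficient statement
  have hcoeff : ∀ i, ∀ B ∈ (f i).support, (B.sum fun _ e => e) = j := by
    intro i B hB
    have h := (mem_homogeneousSubmodule _ _).mp (hfhom i)
    have := h (MvPolynomial.mem_support_iff.mp hB)
    simpa [Finsupp.weight, Finsupp.linearCombination, Finsupp.sum] using this
  -- every element of V has support avoiding all D i
  have Vsupp : ∀ p ∈ V, ∀ A ∈ p.support, ∀ i, A ≠ D i := by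
    intro p hp
    rw [hV] at hp
    induction hp using Submodule.span_induction with
    | mem q hq =>
      obtain ⟨A, -, hA2, rfl⟩ := hq
      intro B hB i
      rw [MvPolynomial.support_monomial] at hB
      simp only [if_neg (one_ne_zero (α := ℝ))] at hB
      rw [Finset.mem_singleton] at hB
      subst hB; exact hA2 i
    | zero => simp
    | add x y hx hy ihx ihy =>
      intro A hA i
      rcases Finset.mem_union.mp (MvPolynomial.support_add hA) with h | h
      · exact ihx A h i
      · exact ihy A h i
    | smul c x hx ihx =>
      intro A hA i
      exact ihx A (MvPolynomial.support_smul hA) i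
  -- every nonzero element of W has some D i in its support
  have Wdeg : ∀ p ∈ W, p ≠ 0 → ∃ i, D i ∈ p.support := by
    intro p hp hp0
    rw [hW] at hp
    obtain ⟨c, hc⟩ := (Submodule.mem_span_range_iff_exists_fun (R := ℝ)).mp hp
    have hcne : ∃ i, c i ≠ 0 := by
      by_contra h
      push_neg at h
      apply hp0
      rw [← hc]
      simp [h]
    set S : Finset (Fin k) := Finset.univ.filter (fun i => c i ≠ 0) with hS
    have hSne : S.Nonempty := by
      obtain ⟨i, hi⟩ := hcne
      exact ⟨i, by simp [hS, hi]⟩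
    obtain ⟨i₀, hi₀S, hi₀max⟩ := Finset.exists_max_image S (fun i => m.toSyn (D i)) hSne
    refine ⟨i₀, ?_⟩
    rw [MvPolynomial.mem_support_iff, ← hc]
    have hterm : ∀ i, i ≠ i₀ → c i * coeff (D i₀) (f i) = 0 := by
      intro i hi
      by_cases hiS : i ∈ S
      · have h0 : coeff (D i₀) (f i) = 0 := by
          by_contra h
          have h1 : m.toSyn (D i₀) ≤ m.toSyn (D i) :=
            m.le_degree' (f i) (MvPolynomial.mem_support_iff.mpr h)
          have h2 : m.toSyn (D i) ≤ m.toSyn (D i₀) := hi₀max i hiS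
          have : D i = D i₀ := m.toSyn.injective (le_antisymm h2 h1)
          exact hi (hdist this)
        rw [h0, mul_zero]
      · have : c i = 0 := by simpa [hS] using hiS
        rw [this, zero_mul]
    have : coeff (D i₀) (∑ i, c i • f i) = c i₀ * coeff (D i₀) (f i₀) := by
      rw [MvPolynomial.coeff_sum]
      rw [Finset.sum_eq_single i₀]
      · rw [MvPolynomial.coeff_smul, smul_eq_mul]
      · intro i _ hi
        rw [MvPolynomial.coeff_smul, smul_eq_mul]
        exact hterm i hi
      · simp
    rw [this]
    have hc0 : c i₀ ≠ 0 := by simpa [hS] using hi₀S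
    have hld : coeff (D i₀) (f i₀) ≠ 0 :=
      MvPolynomial.mem_support_iff.mp (m.degree_mem_support' (hf0 i₀))
    exact mul_ne_zero hc0 hld
  constructor
  · -- V ⊓ W = ⊥
    rw [Submodule.eq_bot_iff]
    rintro p ⟨hpV, hpW⟩
    by_contra hp0
    obtain ⟨i, hi⟩ := Wdeg p hpW hp0
    exact Vsupp p hpV (D i) hi i rfl
  · -- V ⊔ W = homogeneousSubmodule
    apply le_antisymm
    · apply sup_le
      · rw [hV]
        rw [Submodule.span_le]
        rintro q ⟨A, hA1, -, rfl⟩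
        exact isHomogeneous_monomial _ (by simpa [Finsupp.degree_apply, Finsupp.sum] using hA1)
      · rw [hW, Submodule.span_le]
        rintro q ⟨i, rfl⟩
        exact hfhom i
    · -- key: every monomial of degree j is in V ⊔ W, by WF induction
      have key : ∀ a : m.syn, ∀ A : Fin n →₀ ℕ, m.toSyn A = a →
          (A.sum fun _ e => e) = j → monomial A (1 : ℝ) ∈ V ⊔ W := by
        intro a
        induction a using WellFoundedLT.induction with
        | _ a ih =>
          intro A hAa hAj
          by_cases hAD : ∀ i, A ≠ D i
          · apply Submodule.mem_sup_left
            rw [hV]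
            exact Submodule.subset_span ⟨A, hAj, hAD, rfl⟩
          · push_neg at hAD
            obtain ⟨i, rfl⟩ := hAD
            have hAsupp : D i ∈ (f i).support := m.degree_mem_support' (hf0 i)
            set c : ℝ := coeff (D i) (f i) with hc
            have hc0 : c ≠ 0 := MvPolynomial.mem_support_iff.mp hAsupp
            set T : MvPolynomial (Fin n) ℝ :=
              ∑ B ∈ (f i).support.erase (D i), monomial B (coeff B (f i)) with hT
            have hfi : f i = monomial (D i) c + T := by
              rw [hT, hc]
              conv_lhs => rw [MvPolynomial.as_sum (f i)]
              exact (Finset.add_sum_erase _ _ hAsupp).symm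
            have hmono : monomial (D i) (1 : ℝ) = c⁻¹ • f i - c⁻¹ • T := by
              rw [hfi, smul_add, add_sub_cancel_right, MvPolynomial.smul_monomial,
                smul_eq_mul, inv_mul_cancel₀ hc0]
            rw [hmono]
            apply sub_mem
            · exact Submodule.smul_mem _ _ (Submodule.mem_sup_right
                (hW ▸ Submodule.subset_span ⟨i, rfl⟩))
            · apply Submodule.smul_mem
              rw [hT]
              apply Submodule.sum_mem
              intro B hB
              have hBsupp : B ∈ (f i).support := Finset.mem_of_mem_erase hB
              have hBne : B ≠ D i := Finset.ne_of_mem_erase hB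
              have hBlt : m.toSyn B < m.toSyn (D i) :=
                lt_of_le_of_ne (m.le_degree' (f i) hBsupp)
                  (fun h => hBne (m.toSyn.injective h))
              have : monomial B (coeff B (f i)) = coeff B (f i) • monomial B (1 : ℝ) := by
                rw [MvPolynomial.smul_monomial, smul_eq_mul, mul_one]
              rw [this]
              exact Submodule.smul_mem _ _
                (ih (m.toSyn B) (hAa ▸ hBlt) B rfl (hcoeff i B hBsupp))
      intro p hp
      have hph := (mem_homogeneousSubmodule _ _).mp hp
      rw [MvPolynomial.as_sum p]
      apply Submodule.sum_mem
      intro A hA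
      have : monomial A (coeff A p) = coeff A p • monomial A (1 : ℝ) := by
        rw [MvPolynomial.smul_monomial, smul_eq_mul, mul_one]
      rw [this]
      apply Submodule.smul_mem
      apply key (m.toSyn A) A rfl
      have := hph (MvPolynomial.mem_support_iff.mp hA)
      simpa [Finsupp.weight, Finsupp.linearCombination, Finsupp.sum] using this
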